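/- Let x₁, …, x_N be points in [0,1) and let K be a positive integer with K ≤ N^{2/5} and 2K² ≤ N. With M = ⌊N/K⌋ + 1, define A_i = #{ 1 ≤ n ≤ N : x_n ∈ [ i·K/N, (i+1)·K/N ) } for i = 0, …, ⌊N/K⌋ − 1 and A_{⌊N/K⌋} = #{ 1 ≤ n ≤ N : x_n ∈ [ ⌊N/K⌋·K/N, 1 ) }, indices extended cyclically modulo M, and define Z_K = (1/(2K²N)) · ∑_{i=0}^{⌊N/K⌋} ( A_i + A_{i+1} + ⋯ + A_{i+K−1} )². Then max_{L=1,…,K} (1/(2LKN)) · #{ 1 ≤ l ≠ m ≤ N : ‖x_l − x_m‖ < LK/N } ≥ (2/(K+1)) · Z_K − 1/(2K). -/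

import Mathlib

open scoped Classical

/-- Distance from a real number to the nearest integer. -/
noncomputable def nidist (x : ℝ) : ℝ := |x - round x|

/-- Pair correlation count: the number of ordered pairs `1 ≤ l ≠ m ≤ N` with
`‖x l - x m‖ < s / N`. -/
noncomputable def pairCount (x : ℕ → ℝ) (N : ℕ) (s : ℝ) : ℕ :=
  (((Finset.Icc 1 N) ×ˢ (Finset.Icc 1 N)).filter
    (fun p => p.1 ≠ p.2 ∧ nidist (x p.1 - x p.2) < s / N)).card

private lemma mod_small' (z M : ℕ) (hMp : 0 < M) (h : z < 2*M) : z % M = z ∨ z % M + M = z := by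
  rcases Nat.lt_or_ge z M with h' | h'
  · exact Or.inl (Nat.mod_eq_of_lt h')
  · right
    have h2 : z % M = z - M := by
      rw [Nat.mod_eq_sub_mod h', Nat.mod_eq_of_lt (by omega)]
    omega

private lemma nidist_le' (z : ℝ) (n : ℤ) : nidist z ≤ |z - n| := by
  unfold nidist
  by_cases h : n = round z
  · subst h; exact le_refl _
  · have h1 : (1:ℝ) ≤ |(round z : ℝ) - n| := by
      have hne : round z - n ≠ 0 := sub_ne_zero.2 (fun hc => h hc.symm)
      have h0 := Int.one_le_abs hne
      calc (1:ℝ) = ((1:ℤ):ℝ) := by norm_num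
        _ ≤ |((round z - n : ℤ) : ℝ)| := by
            rw [← Int.cast_abs]; exact_mod_cast h0
        _ = |(round z : ℝ) - n| := by push_cast; ring_nf
    have h2 : |z - (round z:ℝ)| ≤ 1/2 := abs_sub_round z
    have h3 : |(round z:ℝ) - n| ≤ |(round z:ℝ) - z| + |z - n| := abs_sub_le _ _ _
    have h4 : |(round z:ℝ) - z| = |z - (round z:ℝ)| := abs_sub_comm _ _
    linarith

private lemma gauss' (K : ℕ) : (∑ L ∈ Finset.Icc 1 K, L) * 2 = K * (K+1) := by
  induction K with
  | zero => simp
  | succ n ih =>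
      rw [Finset.sum_Icc_succ_top (by omega)]
      ring_nf
      ring_nf at ih
      omega

/-- Geometric core: points in cyclically close boxes are close mod 1. -/
private lemma geo' (N K M : ℕ) (hK : 0 < K) (hN : 0 < N)
    (hMK : (M-1)*K ≤ N) (hMK2 : N ≤ M*K)
    (y z : ℝ) (a b L : ℕ) (ha : a < M) (hb : b < M)
    (hya : (a:ℝ)*K/N ≤ y) (hya' : y < ((a:ℝ)+1)*K/N)
    (hzb : (b:ℝ)*K/N ≤ z) (hzb' : z < ((b:ℝ)+1)*K/N)
    (hL : 1 ≤ L) (he : (b + M - a) % M < L) :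
    ∃ n : ℤ, |z - y - n| < (L:ℝ)*K/N := by
  have hMpos : 0 < M := by omega
  have ht : (0:ℝ) < (K:ℝ)/N := by positivity
  have hNR : (0:ℝ) < N := by positivity
  obtain ⟨e, hedef⟩ : ∃ w, (b + M - a) % M = w := ⟨_, rfl⟩
  rw [hedef] at he
  have hm := mod_small' (b + M - a) M hMpos (by omega)
  rw [hedef] at hm
  have hgoal : ∀ n : ℤ, (|z - y - n| < (L:ℝ)*K/N ↔ |z - y - n| < (L:ℝ)*((K:ℝ)/N)) := by
    intro n
    rw [mul_div_assoc]
  rcases hm with hcase | hcase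
  · -- e = b + M - a : wrap-around case, use n = -1
    have hab : a + e = b + M := by omega
    have hee : 1 ≤ e := by omega
    refine ⟨-1, ?_⟩
    rw [hgoal]
    have haR : (a:ℝ) = (b:ℝ) + M - e := by
      have hc : (a:ℝ) + e = (b:ℝ) + M := by exact_mod_cast hab
      linarith
    have h1 : ((M:ℝ)-1)*((K:ℝ)/N) ≤ 1 := by
      have hc : (((M-1)*K : ℕ):ℝ) ≤ (N:ℝ) := by exact_mod_cast hMK
      push_cast [Nat.cast_sub (by omega : 1 ≤ M)] at hc
      rw [← mul_div_assoc, div_le_one hNR]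
      linarith
    have h2 : (1:ℝ) ≤ (M:ℝ)*((K:ℝ)/N) := by
      have hc : (N:ℝ) ≤ ((M*K : ℕ):ℝ) := by exact_mod_cast hMK2
      push_cast at hc
      rw [← mul_div_assoc, le_div_iff₀ hNR, one_mul]
      linarith
    have hz1 : z - y < ((e:ℝ) - M + 1) * ((K:ℝ)/N) := by
      have hlt : z - y < ((b:ℝ)+1)*K/N - (a:ℝ)*K/N := by linarith
      rw [haR] at hlt
      calc z - y < ((b:ℝ)+1)*K/N - ((b:ℝ) + M - e)*K/N := hlt
        _ = ((e:ℝ) - M + 1) * ((K:ℝ)/N) := by ring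
    have hz2 : ((e:ℝ) - M - 1) * ((K:ℝ)/N) < z - y := by
      have hlt : (b:ℝ)*K/N - ((a:ℝ)+1)*K/N < z - y := by linarith
      rw [haR] at hlt
      calc ((e:ℝ) - M - 1) * ((K:ℝ)/N)
          = (b:ℝ)*K/N - (((b:ℝ) + M - e)+1)*K/N := by ring
        _ < z - y := hlt
    have heR : (1:ℝ) ≤ (e:ℝ) := by exact_mod_cast hee
    have heL : (e:ℝ) + 1 ≤ (L:ℝ) := by
      have hc : e + 1 ≤ L := he
      exact_mod_cast hc
    have hLR : (1:ℝ) ≤ (L:ℝ) := by exact_mod_cast hL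
    rw [abs_lt]
    push_cast
    constructor
    · have hlow : ((e:ℝ) - 2) * ((K:ℝ)/N) < z - y + 1 := by linarith [hz2, h1]
      have hcoef : (0:ℝ) ≤ ((e:ℝ) - 2 + L) := by linarith
      have h3 := mul_nonneg hcoef (le_of_lt ht)
      linarith [hlow, h3]
    · have hup : z - y + 1 < ((e:ℝ) + 1) * ((K:ℝ)/N) := by linarith [hz1, h2]
      have hcoef : (0:ℝ) ≤ (L:ℝ) - ((e:ℝ) + 1) := by linarith
      have h3 := mul_nonneg hcoef (le_of_lt ht)
      linarith [hup, h3]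
  · -- e + M = b + M - a, i.e. b = a + e : no wrap, n = 0
    have hab : b = a + e := by omega
    refine ⟨0, ?_⟩
    rw [hgoal]
    have hbR : (b:ℝ) = (a:ℝ) + e := by exact_mod_cast hab
    have heL : (e:ℝ) + 1 ≤ (L:ℝ) := by
      have hc : e + 1 ≤ L := he
      exact_mod_cast hc
    rw [abs_lt]
    push_cast
    constructor
    · have hlt : (b:ℝ)*K/N - ((a:ℝ)+1)*K/N < z - y := by linarith
      rw [hbR] at hlt
      have h3 : ((a:ℝ)+e)*K/N - ((a:ℝ)+1)*K/N = ((e:ℝ)-1)*((K:ℝ)/N) := by ring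
      rw [h3] at hlt
      have he0 : (0:ℝ) ≤ (e:ℝ) := Nat.cast_nonneg e
      have hcoef : (0:ℝ) ≤ (L:ℝ) + ((e:ℝ) - 1) := by linarith
      have h2 := mul_nonneg hcoef (le_of_lt ht)
      linarith [hlt, h2]
    · have hlt : z - y < ((b:ℝ)+1)*K/N - (a:ℝ)*K/N := by linarith
      rw [hbR] at hlt
      have h3 : (((a:ℝ)+e)+1)*K/N - (a:ℝ)*K/N = ((e:ℝ)+1)*((K:ℝ)/N) := by ring
      rw [h3] at hlt
      have hcoef : (0:ℝ) ≤ (L:ℝ) - ((e:ℝ) + 1) := by linarith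
      have h2 := mul_nonneg hcoef (le_of_lt ht)
      linarith [hlt, h2]

/-- With `A i` the box counts for the partition of `[0,1)` into `⌊N/K⌋`
intervals of length `K/N` plus a final interval `[⌊N/K⌋·K/N, 1)` (indices taken
cyclically modulo `M = ⌊N/K⌋ + 1`), and
`Z_K = (1/(2K²N)) ∑_{i=0}^{⌊N/K⌋} (A i + ⋯ + A (i+K-1))²`, we have
`max_{L=1,…,K} (1/(2LKN)) · #{1 ≤ l ≠ m ≤ N : ‖x l − x m‖ < LK/N}
  ≥ (2/(K+1)) Z_K − 1/(2K)`. -/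
theorem max_normalized_pairCount_lower_bound (N K : ℕ) (x : ℕ → ℝ)
    (hx : ∀ n, x n ∈ Set.Ico (0:ℝ) 1)
    (hK : 1 ≤ K) (hK25 : (K:ℝ) ≤ (N:ℝ) ^ ((2:ℝ)/5)) (hK2N : 2 * K ^ 2 ≤ N)
    (M : ℕ) (hM : M = N / K + 1)
    (A : ℕ → ℕ)
    (hA : ∀ i, A i = ((Finset.Icc 1 N).filter (fun n =>
        x n ∈ Set.Ico (((i % M : ℕ) : ℝ) * K / N)
          (if i % M = N / K then 1 else (((i % M : ℕ) : ℝ) + 1) * K / N))).card) :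
    (2 / ((K:ℝ) + 1)) *
        ((1 / (2 * (K:ℝ) ^ 2 * N)) *
          ∑ i ∈ Finset.range M, (∑ j ∈ Finset.Ico i (i+K), (A j : ℝ)) ^ 2)
      - 1 / (2 * K)
      ≤ (Finset.Icc 1 K).sup' (Finset.nonempty_Icc.2 hK)
          (fun L => (1 / (2 * (L:ℝ) * K * N)) * (pairCount x N ((L * K : ℕ) : ℝ) : ℝ)) := by
  -- make N / K opaque
  obtain ⟨Dq, hDq⟩ : ∃ d, N / K = d := ⟨_, rfl⟩
  rw [hDq] at hM hA
  -- basic positivity facts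
  have hKpos : 0 < K := hK
  have hNpos : 0 < N :=
    lt_of_lt_of_le (Nat.mul_pos (by norm_num) (pow_pos hKpos 2)) hK2N
  have hMpos : 0 < M := by rw [hM]; exact Nat.succ_pos _
  have hM2K : 2*K + 1 ≤ M := by
    have h1 : 2*K ≤ Dq := by
      rw [← hDq, Nat.le_div_iff_mul_le hKpos]
      calc 2*K*K = 2*K^2 := by ring
        _ ≤ N := hK2N
    rw [hM]
    exact Nat.succ_le_succ h1
  have hNK1 : (M-1) * K ≤ N := by
    have h0 := Nat.div_mul_le_self N K
    rw [hDq] at h0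
    have h3 : M - 1 = Dq := by omega
    rw [h3]
    exact h0
  have hNK2 : N ≤ M * K := by
    have h2 : N % K < K := Nat.mod_lt _ hKpos
    have h1 := Nat.div_add_mod N K
    rw [hDq] at h1
    calc N = K * Dq + N % K := h1.symm
      _ ≤ K * Dq + K := by omega
      _ = M * K := by rw [hM]; ring
  have hKR : (0:ℝ) < K := by exact_mod_cast hKpos
  have hNR : (0:ℝ) < N := by exact_mod_cast hNpos
  -- the box index function
  set f : ℕ → ℕ := fun n => min (Nat.floor (x n * N / K)) Dq with hfdef
  have hfle : ∀ n, f n ≤ Dq := fun n => min_le_right _ _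
  have hfM : ∀ n, f n < M := fun n => by
    rw [hM]; exact Nat.lt_succ_of_le (hfle n)
  -- pointwise characterization
  have hiff : ∀ (n u : ℕ), u ≤ Dq →
      (x n ∈ Set.Ico ((u:ℝ) * K / N)
        (if u = Dq then 1 else ((u:ℝ) + 1) * K / N) ↔ f n = u) := by
    intro n u hu
    have hx0 : (0:ℝ) ≤ x n := (hx n).1
    have hx1 : x n < 1 := (hx n).2
    have hfloornn : (0:ℝ) ≤ x n * N / K := by positivity
    have key1 : ∀ t : ℕ, ((t:ℝ) * K / N ≤ x n ↔ (t:ℕ) ≤ Nat.floor (x n * N / K)) := by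
      intro t
      rw [Nat.le_floor_iff hfloornn, div_le_iff₀ hNR, le_div_iff₀ hKR]
    have key2 : ∀ t : ℕ, (x n < (t:ℝ) * K / N ↔ Nat.floor (x n * N / K) < t) := by
      intro t
      rw [Nat.floor_lt hfloornn, lt_div_iff₀ hNR, div_lt_iff₀ hKR]
    by_cases hcase : u = Dq
    · subst hcase
      simp only [if_pos rfl, Set.mem_Ico]
      constructor
      · rintro ⟨h1, _⟩
        have h2 : u ≤ Nat.floor (x n * N / K) := (key1 u).1 h1
        show min (Nat.floor (x n * N / K)) u = u
        exact min_eq_right h2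
      · intro h
        refine ⟨?_, hx1⟩
        apply (key1 u).2
        have h0 : min (Nat.floor (x n * N / K)) u = u := h
        exact min_eq_right_iff.mp h0
    · rw [if_neg hcase]
      simp only [Set.mem_Ico]
      have hulb : u < Dq := lt_of_le_of_ne hu hcase
      constructor
      · rintro ⟨h1, h2⟩
        have ha : u ≤ Nat.floor (x n * N / K) := (key1 u).1 h1
        have hb : Nat.floor (x n * N / K) < u + 1 := by
          apply (key2 (u+1)).1
          calc x n < ((u:ℝ)+1) * K / N := h2
            _ = ((u+1 : ℕ):ℝ) * K / N := by push_cast; ring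
        have hfl : Nat.floor (x n * N / K) = u := le_antisymm (Nat.lt_succ_iff.mp hb) ha
        show min (Nat.floor (x n * N / K)) Dq = u
        rw [hfl]
        exact min_eq_left (le_of_lt hulb)
      · intro h
        have h0 : min (Nat.floor (x n * N / K)) Dq = u := h
        have hfl : Nat.floor (x n * N / K) = u := by
          rcases le_total (Nat.floor (x n * N / K)) Dq with hle | hle
          · have h' : min (Nat.floor (x n * N / K)) Dq = Nat.floor (x n * N / K) :=
              min_eq_left hle
            rw [h'] at h0
            exact h0
          · have h' : min (Nat.floor (x n * N / K)) Dq = Dq := min_eq_right hle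
            rw [h'] at h0
            exact absurd h0.symm (ne_of_lt hulb)
        constructor
        · exact (key1 u).2 (le_of_eq hfl.symm)
        · have hlt : Nat.floor (x n * N / K) < u + 1 := by rw [hfl]; exact Nat.lt_succ_self u
          have h2 : x n < ((u+1:ℕ):ℝ) * K / N := (key2 (u+1)).2 hlt
          calc x n < ((u+1:ℕ):ℝ) * K / N := h2
            _ = ((u:ℝ)+1) * K / N := by push_cast; ring
  -- fiber counts
  set F : ℕ → ℕ := fun u => ((Finset.Icc 1 N).filter (fun n => f n = u)).card with hFdef
  have hAF : ∀ j, A j = F (j % M) := by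
    intro j
    have hjm : j % M ≤ Dq := by
      have h1 : j % M < M := Nat.mod_lt _ hMpos
      omega
    rw [hA j, hFdef]
    congr 1
    apply Finset.filter_congr
    intro n _
    first
    | exact hiff n (j % M) hjm
    | (simp only [eq_iff_iff]; exact hiff n (j % M) hjm)
  -- bounds for points in their boxes
  have hfb : ∀ n, (f n : ℝ) * K / N ≤ x n ∧ x n < ((f n : ℝ) + 1) * K / N := by
    intro n
    have hx0 : (0:ℝ) ≤ x n := (hx n).1
    have hx1 : x n < 1 := (hx n).2
    have h := (hiff n (f n) (hfle n)).2 rfl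
    by_cases hcase : f n = Dq
    · rw [hcase] at h ⊢
      rw [if_pos rfl] at h
      refine ⟨h.1, ?_⟩
      have hle : (1:ℝ) ≤ ((Dq:ℝ)+1) * K / N := by
        rw [le_div_iff₀ hNR, one_mul]
        have hc : (N:ℝ) ≤ ((M*K : ℕ):ℝ) := by exact_mod_cast hNK2
        push_cast at hc
        have hMR : (M:ℝ) = (Dq:ℝ) + 1 := by
          rw [hM]; push_cast; ring
        rw [hMR] at hc
        linarith
      linarith [h.2]
    · rw [if_neg hcase] at h
      exact ⟨h.1, h.2⟩
  -- geometric lemma wrapper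
  have geo2 : ∀ l m L : ℕ, 1 ≤ L → L ≤ K →
      ((f m + M - f l) % M < L ∨ (f l + M - f m) % M < L) →
      nidist (x l - x m) < ((L * K : ℕ) : ℝ) / N := by
    intro l m L hL1 hLK hd
    have hc : ((L * K : ℕ) : ℝ) / N = (L:ℝ) * K / N := by push_cast; ring
    rw [hc]
    rcases hd with hd | hd
    · obtain ⟨n, hn⟩ := geo' N K M hKpos hNpos hNK1 hNK2 (x l) (x m) (f l) (f m) L
        (hfM l) (hfM m) (hfb l).1 (hfb l).2 (hfb m).1 (hfb m).2 hL1 hd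
      have hle : nidist (x l - x m) ≤ |x l - x m - ((-n : ℤ):ℝ)| := nidist_le' _ _
      have heq : |x l - x m - ((-n : ℤ):ℝ)| = |x m - x l - (n:ℝ)| := by
        rw [← abs_neg]; congr 1; push_cast; ring
      rw [heq] at hle
      linarith
    · obtain ⟨n, hn⟩ := geo' N K M hKpos hNpos hNK1 hNK2 (x m) (x l) (f m) (f l) L
        (hfM m) (hfM l) (hfb m).1 (hfb m).2 (hfb l).1 (hfb l).2 hL1 hd
      have hle : nidist (x l - x m) ≤ |x l - x m - ((n : ℤ):ℝ)| := nidist_le' _ _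
      linarith
  -- the Q sets
  set Q : ℕ → Finset (ℕ × ℕ) := fun L =>
    ((Finset.Icc 1 N) ×ˢ (Finset.Icc 1 N)).filter
      (fun p => nidist (x p.1 - x p.2) < ((L * K : ℕ) : ℝ) / N) with hQdef
  -- the G sets
  set G : ℕ × ℕ × ℕ → Finset (ℕ × ℕ) := fun r =>
    ((Finset.Icc 1 N) ×ˢ (Finset.Icc 1 N)).filter
      (fun p => f p.1 = (r.1 + r.2.1) % M ∧ f p.2 = (r.1 + r.2.2) % M) with hGdef
  have hcardG : ∀ i a b : ℕ, (G (i, a, b)).card = F ((i + a) % M) * F ((i + b) % M) := by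
    intro i a b
    have hGr : G (i, a, b) = ((Finset.Icc 1 N) ×ˢ (Finset.Icc 1 N)).filter
        (fun p => f p.1 = (i + a) % M ∧ f p.2 = (i + b) % M) := rfl
    rw [hGr, Finset.filter_product (fun n => f n = (i + a) % M) (fun n => f n = (i + b) % M),
      Finset.card_product]
  -- main counting inequality, in ℕ
  have hmain : (∑ i ∈ Finset.range M, (∑ j ∈ Finset.Ico i (i+K), A j)^2)
      ≤ ∑ L ∈ Finset.Icc 1 K, (Q L).card := by
    have e1 : ∀ i, (∑ j ∈ Finset.Ico i (i+K), A j) = ∑ a ∈ Finset.range K, F ((i+a) % M) := by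
      intro i
      rw [Finset.sum_Ico_eq_sum_range]
      simp only [Nat.add_sub_cancel_left]
      exact Finset.sum_congr rfl fun a _ => hAF (i+a)
    have e2 : (∑ i ∈ Finset.range M, (∑ j ∈ Finset.Ico i (i+K), A j)^2)
        = ((Finset.range M ×ˢ (Finset.range K ×ˢ Finset.range K)).sigma G).card := by
      rw [Finset.card_sigma, Finset.sum_product]
      refine Finset.sum_congr rfl fun i _ => ?_
      rw [Finset.sum_product]
      rw [e1, sq, Finset.sum_mul_sum]
      refine Finset.sum_congr rfl fun a _ => Finset.sum_congr rfl fun b _ => ?_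
      rw [hcardG i a b]
    rw [e2]
    have e3 : ∑ L ∈ Finset.Icc 1 K, (Q L).card = ((Finset.Icc 1 K).sigma Q).card :=
      (Finset.card_sigma _ _).symm
    rw [e3]
    apply Finset.card_le_card_of_injOn (fun z => ⟨max z.1.2.1 z.1.2.2 + 1, z.2⟩)
    · -- maps to
      rintro ⟨⟨i, a, b⟩, l, m⟩ hz
      simp only [Finset.mem_coe, Finset.mem_sigma, Finset.mem_product, Finset.mem_range] at hz
      obtain ⟨⟨hi, ha, hb⟩, hG⟩ := hz
      have hG' : (l, m) ∈ ((Finset.Icc 1 N) ×ˢ (Finset.Icc 1 N)).filter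
          (fun p => f p.1 = (i + a) % M ∧ f p.2 = (i + b) % M) := hG
      simp only [Finset.mem_filter, Finset.mem_product] at hG'
      obtain ⟨⟨hl, hm⟩, hfl, hfm⟩ := hG'
      simp only [Finset.mem_coe, Finset.mem_sigma, Finset.mem_Icc]
      refine ⟨⟨Nat.succ_le_succ (Nat.zero_le _), Nat.succ_le_of_lt (max_lt ha hb)⟩, ?_⟩
      have hnid : nidist (x l - x m) < (((max a b + 1) * K : ℕ) : ℝ) / N := by
        apply geo2 l m (max a b + 1) (Nat.succ_le_succ (Nat.zero_le _))
          (Nat.succ_le_of_lt (max_lt ha hb))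
        rw [hfl, hfm]
        obtain ⟨u, hu1⟩ : ∃ w, (i + a) % M = w := ⟨_, rfl⟩
        obtain ⟨v, hv1⟩ : ∃ w, (i + b) % M = w := ⟨_, rfl⟩
        rw [hu1, hv1]
        have hu : u < M := hu1 ▸ Nat.mod_lt _ hMpos
        have hv : v < M := hv1 ▸ Nat.mod_lt _ hMpos
        have m1 := mod_small' (i + a) M hMpos (by omega)
        have m2 := mod_small' (i + b) M hMpos (by omega)
        rw [hu1] at m1
        rw [hv1] at m2
        obtain ⟨e1', he1⟩ : ∃ w, (v + M - u) % M = w := ⟨_, rfl⟩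
        obtain ⟨e2', he2⟩ : ∃ w, (u + M - v) % M = w := ⟨_, rfl⟩
        rw [he1, he2]
        have m3 := mod_small' (v + M - u) M hMpos (by omega)
        have m4 := mod_small' (u + M - v) M hMpos (by omega)
        have he1lt : e1' < M := he1 ▸ Nat.mod_lt _ hMpos
        have he2lt : e2' < M := he2 ▸ Nat.mod_lt _ hMpos
        rw [he1] at m3
        rw [he2] at m4
        have hmx1 : a ≤ max a b := le_max_left _ _
        have hmx2 : b ≤ max a b := le_max_right _ _
        have hmx3 : max a b = a ∨ max a b = b := max_choice a b
        omega
      exact Finset.mem_filter.mpr ⟨Finset.mem_product.mpr ⟨hl, hm⟩, hnid⟩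
    · -- injectivity
      rintro ⟨⟨i, a, b⟩, l, m⟩ hz1 ⟨⟨i', a', b'⟩, l', m'⟩ hz2 heq
      simp only [Finset.mem_coe, Finset.mem_sigma, Finset.mem_product, Finset.mem_range] at hz1 hz2
      obtain ⟨⟨hi, ha, hb⟩, hG1⟩ := hz1
      obtain ⟨⟨hi', ha', hb'⟩, hG2⟩ := hz2
      have hG1' : (l, m) ∈ ((Finset.Icc 1 N) ×ˢ (Finset.Icc 1 N)).filter
          (fun p => f p.1 = (i + a) % M ∧ f p.2 = (i + b) % M) := hG1
      have hG2' : (l', m') ∈ ((Finset.Icc 1 N) ×ˢ (Finset.Icc 1 N)).filter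
          (fun p => f p.1 = (i' + a') % M ∧ f p.2 = (i' + b') % M) := hG2
      simp only [Finset.mem_filter, Finset.mem_product] at hG1' hG2'
      obtain ⟨-, hfl1, hfm1⟩ := hG1'
      obtain ⟨-, hfl2, hfm2⟩ := hG2'
      have heq' : (⟨max a b + 1, (l, m)⟩ : (_ : ℕ) × ℕ × ℕ)
          = ⟨max a' b' + 1, (l', m')⟩ := heq
      have hfst : max a b + 1 = max a' b' + 1 := congrArg Sigma.fst heq'
      have hsnd : (l, m) = (l', m') := congrArg Sigma.snd heq'
      obtain ⟨h1, h2⟩ := Prod.ext_iff.mp hsnd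
      simp only at h1 h2
      subst h1
      subst h2
      rw [hfl1] at hfl2
      rw [hfm1] at hfm2
      obtain ⟨u, hu1⟩ : ∃ w, (i + a) % M = w := ⟨_, rfl⟩
      obtain ⟨v, hv1⟩ : ∃ w, (i + b) % M = w := ⟨_, rfl⟩
      obtain ⟨u', hu2⟩ : ∃ w, (i' + a') % M = w := ⟨_, rfl⟩
      obtain ⟨v', hv2⟩ : ∃ w, (i' + b') % M = w := ⟨_, rfl⟩
      have hu : u < M := hu1 ▸ Nat.mod_lt _ hMpos
      have hv : v < M := hv1 ▸ Nat.mod_lt _ hMpos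
      have hu' : u' < M := hu2 ▸ Nat.mod_lt _ hMpos
      have hv' : v' < M := hv2 ▸ Nat.mod_lt _ hMpos
      have m1 := mod_small' (i + a) M hMpos (by omega)
      have m2 := mod_small' (i + b) M hMpos (by omega)
      have m3 := mod_small' (i' + a') M hMpos (by omega)
      have m4 := mod_small' (i' + b') M hMpos (by omega)
      rw [hu1] at m1
      rw [hv1] at m2
      rw [hu2] at m3
      rw [hv2] at m4
      rw [hu1, hu2] at hfl2
      rw [hv1, hv2] at hfm2
      have hmxa1 : a ≤ max a b := le_max_left _ _
      have hmxa2 : b ≤ max a b := le_max_right _ _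
      have hmxa3 : max a b = a ∨ max a b = b := max_choice a b
      have hmxb1 : a' ≤ max a' b' := le_max_left _ _
      have hmxb2 : b' ≤ max a' b' := le_max_right _ _
      have hmxb3 : max a' b' = a' ∨ max a' b' = b' := max_choice a' b'
      obtain ⟨c, hc⟩ : ∃ w, max a b = w := ⟨_, rfl⟩
      obtain ⟨c', hc'⟩ : ∃ w, max a' b' = w := ⟨_, rfl⟩
      rw [hc] at hmxa1 hmxa2 hmxa3 hfst
      rw [hc'] at hmxb1 hmxb2 hmxb3 hfst
      have hiab : i = i' ∧ a = a' ∧ b = b' := by omega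
      simp [hiab.1, hiab.2.1, hiab.2.2]
  -- bound Q by pairCount + N
  have hQbound : ∀ L, (Q L).card ≤ pairCount x N ((L * K : ℕ) : ℝ) + N := by
    intro L
    classical
    set P : Finset (ℕ × ℕ) := ((Finset.Icc 1 N) ×ˢ (Finset.Icc 1 N)).filter
      (fun p => p.1 ≠ p.2 ∧ nidist (x p.1 - x p.2) < ((L * K : ℕ) : ℝ) / N) with hPdef
    set D : Finset (ℕ × ℕ) := (Finset.Icc 1 N).image (fun n => (n, n)) with hDdef
    have hsub : Q L ⊆ P ∪ D := by
      intro p hp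
      have hp' : p ∈ ((Finset.Icc 1 N) ×ˢ (Finset.Icc 1 N)).filter
          (fun p => nidist (x p.1 - x p.2) < ((L * K : ℕ) : ℝ) / N) := hp
      simp only [Finset.mem_filter, Finset.mem_product] at hp'
      obtain ⟨⟨h1, h2⟩, h3⟩ := hp'
      rw [Finset.mem_union]
      by_cases hd : p.1 = p.2
      · right
        rw [hDdef, Finset.mem_image]
        exact ⟨p.1, h1, Prod.ext_iff.mpr ⟨rfl, hd⟩⟩
      · left
        rw [hPdef]
        simp only [Finset.mem_filter, Finset.mem_product]
        exact ⟨⟨h1, h2⟩, hd, h3⟩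
    have hP : P.card = pairCount x N ((L * K : ℕ) : ℝ) := rfl
    have hD : D.card ≤ N := by
      calc D.card ≤ (Finset.Icc 1 N).card := Finset.card_image_le
        _ = N := by rw [Nat.card_Icc]; omega
    calc (Q L).card ≤ (P ∪ D).card := Finset.card_le_card hsub
      _ ≤ P.card + D.card := Finset.card_union_le _ _
      _ ≤ pairCount x N ((L * K : ℕ) : ℝ) + N := by omega
  clear_value f F G Q
  clear hiff hfb hfle hfM hAF geo2 hcardG hfdef hFdef hGdef hQdef hA
  -- now the analytic part
  set V := (Finset.Icc 1 K).sup' (Finset.nonempty_Icc.2 hK)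
      (fun L => (1 / (2 * (L:ℝ) * K * N)) * (pairCount x N ((L * K : ℕ) : ℝ) : ℝ)) with hVdef
  have hsup : ∀ b ∈ Finset.Icc 1 K,
      (1 / (2 * (b:ℝ) * K * N)) * (pairCount x N ((b * K : ℕ) : ℝ) : ℝ) ≤ V := by
    intro b hb
    rw [hVdef]
    exact Finset.le_sup'
      (fun L : ℕ => (1 / (2 * (L:ℝ) * K * N)) * (pairCount x N ((L * K : ℕ) : ℝ) : ℝ)) hb
  clear_value V
  have hV0 : 0 ≤ V := by
    have hmem : (1:ℕ) ∈ Finset.Icc 1 K := Finset.mem_Icc.2 ⟨le_refl 1, hK⟩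
    refine le_trans ?_ (hsup 1 hmem)
    positivity
  have hpc : ∀ L ∈ Finset.Icc 1 K, (pairCount x N ((L * K : ℕ) : ℝ) : ℝ) ≤ 2 * L * K * N * V := by
    intro L hL
    have hLmem := Finset.mem_Icc.1 hL
    have hL1 : (1:ℝ) ≤ L := by exact_mod_cast hLmem.1
    have hpos : (0:ℝ) < 2 * (L:ℝ) * K * N := by positivity
    have h2 : (1 / (2 * (L:ℝ) * K * N)) * (pairCount x N ((L * K : ℕ) : ℝ) : ℝ) ≤ V :=
      hsup L hL
    calc (pairCount x N ((L * K : ℕ) : ℝ) : ℝ)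
        = (2 * (L:ℝ) * K * N) * ((1 / (2 * (L:ℝ) * K * N)) * (pairCount x N ((L * K : ℕ) : ℝ) : ℝ)) := by
          field_simp
      _ ≤ (2 * (L:ℝ) * K * N) * V := by
          apply mul_le_mul_of_nonneg_left h2 (le_of_lt hpos)
      _ = 2 * L * K * N * V := by ring
  -- sum bound in ℝ
  set S : ℝ := ∑ i ∈ Finset.range M, (∑ j ∈ Finset.Ico i (i+K), (A j : ℝ)) ^ 2 with hSdef
  have hScast : S = ((∑ i ∈ Finset.range M, (∑ j ∈ Finset.Ico i (i+K), A j)^2 : ℕ) : ℝ) := by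
    rw [hSdef]; push_cast; rfl
  clear_value S
  have hgauss : (∑ L ∈ Finset.Icc 1 K, (L:ℝ)) = K * (K+1) / 2 := by
    have h0 := gauss' K
    have h2 : ((∑ L ∈ Finset.Icc 1 K, L : ℕ):ℝ) * 2 = (K:ℝ) * (K+1) := by exact_mod_cast h0
    push_cast at h2
    linarith
  have hS : S ≤ (K:ℝ)^2 * (K+1) * N * V + K * N := by
    rw [hScast]
    calc ((∑ i ∈ Finset.range M, (∑ j ∈ Finset.Ico i (i+K), A j)^2 : ℕ) : ℝ)
        ≤ ((∑ L ∈ Finset.Icc 1 K, (Q L).card : ℕ) : ℝ) := by exact_mod_cast hmain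
      _ = ∑ L ∈ Finset.Icc 1 K, ((Q L).card : ℝ) := by push_cast; rfl
      _ ≤ ∑ L ∈ Finset.Icc 1 K, ((pairCount x N ((L * K : ℕ) : ℝ) : ℝ) + N) := by
          apply Finset.sum_le_sum
          intro L _
          have h0 := hQbound L
          have h2 : ((Q L).card : ℝ) ≤ ((pairCount x N ((L * K : ℕ) : ℝ) + N : ℕ):ℝ) := by
            exact_mod_cast h0
          rw [Nat.cast_add] at h2
          linarith
      _ ≤ ∑ L ∈ Finset.Icc 1 K, (2 * (L:ℝ) * K * N * V + N) := by
          apply Finset.sum_le_sum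
          intro L hL
          have h0 := hpc L hL
          linarith
      _ = 2 * K * N * V * (∑ L ∈ Finset.Icc 1 K, (L:ℝ)) + K * N := by
          rw [Finset.sum_add_distrib, Finset.sum_const, Nat.card_Icc]
          simp only [Nat.add_sub_cancel, nsmul_eq_mul]
          congr 1
          rw [Finset.mul_sum]
          exact Finset.sum_congr rfl fun i _ => by ring
      _ = (K:ℝ)^2 * (K+1) * N * V + K * N := by
          rw [hgauss]; ring
  -- final computation
  have hc1 : (0:ℝ) < ((K:ℝ)+1) * ((K:ℝ)^2 * N) := by positivity
  have h1 : 2 / ((K:ℝ) + 1) * (1 / (2 * (K:ℝ) ^ 2 * N) * S) = S / (((K:ℝ)+1) * ((K:ℝ)^2 * N)) := by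
    field_simp
  have h2 : S / (((K:ℝ)+1) * ((K:ℝ)^2 * N)) ≤ V + 1 / ((K:ℝ) * (K+1)) := by
    rw [div_le_iff₀ hc1]
    have heq : (V + 1 / ((K:ℝ) * (K+1))) * (((K:ℝ)+1) * ((K:ℝ)^2 * N))
        = (K:ℝ)^2 * (K+1) * N * V + K * N := by
      field_simp
    rw [heq]
    exact hS
  have h3 : 1 / ((K:ℝ) * (K+1)) ≤ 1 / (2*K) := by
    apply one_div_le_one_div_of_le (by positivity)
    have hk1 : (1:ℝ) ≤ K := by exact_mod_cast hK
    calc 2*(K:ℝ) = (K:ℝ)*2 := by ring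
      _ ≤ (K:ℝ)*(K+1) := by
          apply mul_le_mul_of_nonneg_left _ (le_of_lt hKR)
          linarith
  rw [h1]
  linarith [h2, h3]
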